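/- Under the hypotheses of the previous statement, if additionally μ satisfies the non-Dini condition ∫₀^{a} μ(τ)/τ dτ = +∞, then Ỹ cannot be defined on all of [1,∞); i.e., there is no C¹ function Ỹ : [1,∞) → [a,∞) satisfying Ỹ'(R)/Ỹ(R)^p ≥ c R^{−1} μ(a R^{−θ}) for all R ≥ 1. -/

import Mathlib

open MeasureTheory Set

/-- Under the hypotheses of the blow-up ODE lemma, if moreover `μ` satisfies the
non-Dini condition `∫₀^a μ(τ)/τ dτ = +∞`, then no `C¹` function `Ỹ : [1,∞) → [a,∞)`
can satisfy `Ỹ'(R)/Ỹ(R)^p ≥ c R⁻¹ μ(a R^{−θ})` for all `R ≥ 1`. -/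
theorem blowup_no_global_solution
    (p a c θ : ℝ) (hp : 1 < p) (ha : 0 < a) (hc : 0 < c) (hθ : 0 < θ)
    (μ : ℝ → ℝ) (hmono : Monotone μ) (hnonneg : ∀ τ, 0 ≤ μ τ)
    (hnonDini : ¬ IntegrableOn (fun τ => μ τ / τ) (Ioc 0 a)) :
    ¬ ∃ Y Y' : ℝ → ℝ,
        (∀ R : ℝ, 1 ≤ R → HasDerivAt Y (Y' R) R) ∧
        ContinuousOn Y' (Ici 1) ∧
        (∀ R : ℝ, 1 ≤ R → a ≤ Y R) ∧
        (∀ R : ℝ, 1 ≤ R → c * R⁻¹ * μ (a * R ^ (-θ)) ≤ Y' R / (Y R) ^ p) := by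
  rintro ⟨Y, Y', hderiv, hY'cont, hYa, hode⟩
  have hμmeas : Measurable μ := hmono.measurable
  have hYpos : ∀ t, (1:ℝ) ≤ t → 0 < Y t := fun t ht => lt_of_lt_of_le ha (hYa t ht)
  set K : ℝ := (p-1)⁻¹ * a ^ (1-p) with hK
  -- Step 1 : the FTC bound on the interval integral of Y'/Y^p
  have step1 : ∀ R : ℝ, 1 ≤ R → ∫ t in (1:ℝ)..R, Y' t / Y t ^ p ≤ K := by
    intro R hR
    have hF : ∀ t ∈ uIcc (1:ℝ) R,
        HasDerivAt (fun t => -(p-1)⁻¹ * Y t ^ (1-p)) (Y' t / Y t ^ p) t := by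
      intro t ht
      rw [uIcc_of_le hR] at ht
      have ht1 : 1 ≤ t := ht.1
      have hYt := hYpos t ht1
      have h1 := ((hderiv t ht1).rpow_const (p := 1-p) (Or.inl hYt.ne'))
      have h2 := h1.const_mul (-(p-1)⁻¹)
      refine h2.congr_deriv (Eq.symm ?_)
      have he : (1:ℝ) - p - 1 = -p := by ring
      rw [he, Real.rpow_neg hYt.le]
      have h4 : (p-1) * (p-1)⁻¹ = 1 := mul_inv_cancel₀ (by linarith)
      rw [div_eq_mul_inv]
      linear_combination (-(Y' t * (Y t ^ p)⁻¹)) * h4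
    have hcont : ContinuousOn (fun t => Y' t / Y t ^ p) (uIcc 1 R) := by
      rw [uIcc_of_le hR]
      have hYc : ContinuousOn Y (Icc 1 R) := fun t ht =>
        ((hderiv t ht.1).continuousAt).continuousWithinAt
      apply ContinuousOn.div
      · exact hY'cont.mono (fun t ht => ht.1)
      · exact fun t ht => (Real.continuousAt_rpow_const _ _
          (Or.inl (hYpos t ht.1).ne')).comp_continuousWithinAt (hYc t ht)
      · exact fun t ht => (Real.rpow_pos_of_pos (hYpos t ht.1) p).ne'
    have hint : IntervalIntegrable (fun t => Y' t / Y t ^ p) volume 1 R :=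
      hcont.intervalIntegrable
    rw [intervalIntegral.integral_eq_sub_of_hasDerivAt hF hint]
    have h1 : Y 1 ^ (1-p) ≤ a ^ (1-p) :=
      Real.rpow_le_rpow_of_nonpos ha (hYa 1 le_rfl) (by linarith)
    have h2 : (0:ℝ) ≤ Y R ^ (1-p) := (Real.rpow_pos_of_pos (hYpos R hR) _).le
    have hp1 : (0:ℝ) < (p-1)⁻¹ := inv_pos.mpr (by linarith)
    nlinarith [mul_le_mul_of_nonneg_left h1 hp1.le]
  -- Step 2 : change of variables
  have step2 : ∀ R : ℝ, 1 ≤ R →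
      ∫ τ in Ioc (a * R ^ (-θ)) a, μ τ / τ
        = θ * ∫ t in Ico (1:ℝ) R, t⁻¹ * μ (a * t ^ (-θ)) := by
    intro R hR
    have hR0 : (0:ℝ) < R := lt_of_lt_of_le one_pos hR
    set s : Set ℝ := Ico (1:ℝ) R with hs
    set f : ℝ → ℝ := fun t => a * t ^ (-θ) with hf
    set f' : ℝ → ℝ := fun t => a * (-θ * t ^ (-θ - 1)) with hf'
    have hms : MeasurableSet s := measurableSet_Ico
    have hd : ∀ t ∈ s, HasDerivWithinAt f (f' t) s t := by
      intro t ht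
      have ht0 : (0:ℝ) < t := lt_of_lt_of_le one_pos ht.1
      exact (((Real.hasDerivAt_rpow_const (p := -θ)
        (Or.inl ht0.ne')).const_mul a)).hasDerivWithinAt
    have hanti : StrictAntiOn f s := by
      intro x hx y hy hxy
      have hx0 : (0:ℝ) < x := lt_of_lt_of_le one_pos hx.1
      exact mul_lt_mul_of_pos_left
        (Real.rpow_lt_rpow_of_neg hx0 hxy (neg_neg_iff_pos.mpr hθ)) ha
    have hinj : InjOn f s := hanti.injOn
    have hptwise : ∀ t ∈ s, |f' t| • (μ (f t) / f t) = θ * (t⁻¹ * μ (a * t ^ (-θ))) := by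
      intro t ht
      have ht0 : (0:ℝ) < t := lt_of_lt_of_le one_pos ht.1
      have hft : 0 < f t := mul_pos ha (Real.rpow_pos_of_pos ht0 _)
      have hx : (0:ℝ) < t ^ (-θ - 1 : ℝ) := Real.rpow_pos_of_pos ht0 _
      have habs : |f' t| = a * θ * t ^ (-θ - 1) := by
        rw [hf']
        have hneg : a * (-θ * t ^ (-θ - 1:ℝ)) ≤ 0 := by
          nlinarith [mul_pos (mul_pos ha hθ) hx]
        rw [abs_of_nonpos hneg]
        ring
      rw [smul_eq_mul, habs, hf]
      have hsub : t ^ (-θ - 1 : ℝ) = t ^ (-θ : ℝ) * t⁻¹ := by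
        rw [show (-θ - 1 : ℝ) = -θ + (-1) by ring, Real.rpow_add ht0, Real.rpow_neg_one]
      rw [hsub]
      have h1 : (0:ℝ) < t ^ (-θ:ℝ) := Real.rpow_pos_of_pos ht0 _
      field_simp
    have himg : f '' s = Ioc (a * R ^ (-θ)) a := by
      apply Subset.antisymm
      · rintro τ ⟨t, ht, rfl⟩
        have ht0 : (0:ℝ) < t := lt_of_lt_of_le one_pos ht.1
        constructor
        · exact mul_lt_mul_of_pos_left
            (Real.rpow_lt_rpow_of_neg ht0 ht.2 (neg_neg_iff_pos.mpr hθ)) ha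
        · have hle : t ^ (-θ:ℝ) ≤ 1 := Real.rpow_le_one_of_one_le_of_nonpos ht.1 (by linarith)
          calc a * t ^ (-θ:ℝ) ≤ a * 1 := by gcongr
            _ = a := mul_one a
      · rintro τ ⟨hτ1, hτ2⟩
        have hτ0 : 0 < τ := lt_of_le_of_lt (by positivity) hτ1
        refine ⟨(a / τ) ^ θ⁻¹, ⟨?_, ?_⟩, ?_⟩
        · exact Real.one_le_rpow ((one_le_div hτ0).mpr hτ2) (by positivity)
        · have key : a = R ^ θ * (a * R ^ (-θ)) := by
            rw [← mul_assoc, mul_comm (R^θ) a, mul_assoc, ← Real.rpow_add hR0]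
            simp
          have hRθ : a / τ < R ^ θ := by
            rw [div_lt_iff₀ hτ0]
            calc a = R ^ θ * (a * R ^ (-θ)) := key
              _ < R ^ θ * τ := by
                  have hRp : (0:ℝ) < R ^ θ := Real.rpow_pos_of_pos hR0 _
                  gcongr
          calc (a / τ) ^ (θ⁻¹:ℝ) < (R ^ θ) ^ (θ⁻¹:ℝ) :=
                Real.rpow_lt_rpow (by positivity) hRθ (by positivity)
            _ = R := by
                rw [← Real.rpow_mul hR0.le, mul_inv_cancel₀ hθ.ne', Real.rpow_one]
        · show a * ((a / τ) ^ (θ⁻¹:ℝ)) ^ (-θ:ℝ) = τ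
          rw [← Real.rpow_mul (by positivity), show θ⁻¹ * -θ = -1 by field_simp,
            Real.rpow_neg_one, inv_div]
          field_simp
    rw [← himg, integral_image_eq_integral_abs_deriv_smul hms hd hinj,
      setIntegral_congr_fun hms hptwise, integral_const_mul]
  -- Step 2' : the uniform bound
  have hM : ∀ R : ℝ, 1 ≤ R → ∫ τ in Ioc (a * R ^ (-θ)) a, μ τ / τ ≤ θ / c * K := by
    intro R hR
    have hgmeas : Measurable fun t : ℝ => t⁻¹ * μ (a * t ^ (-θ)) := by
      have : Measurable fun t : ℝ => a * t ^ (-θ) := by measurability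
      exact measurable_inv.mul (hμmeas.comp this)
    have hgint : IntegrableOn (fun t : ℝ => t⁻¹ * μ (a * t ^ (-θ))) (Ico 1 R) := by
      apply Measure.integrableOn_of_bounded (M := μ a)
      · exact ((measure_mono Ico_subset_Icc_self).trans_lt measure_Icc_lt_top).ne
      · exact hgmeas.aestronglyMeasurable
      · rw [ae_restrict_iff' measurableSet_Ico]
        refine ae_of_all _ fun t ht => ?_
        have ht0 : (0:ℝ) < t := lt_of_lt_of_le one_pos ht.1
        have hft : a * t ^ (-θ:ℝ) ≤ a := by
          have hle : t ^ (-θ:ℝ) ≤ 1 := Real.rpow_le_one_of_one_le_of_nonpos ht.1 (by linarith)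
          calc a * t ^ (-θ:ℝ) ≤ a * 1 := by gcongr
            _ = a := mul_one a
        have hinv : t⁻¹ ≤ 1 := inv_le_one_of_one_le₀ ht.1
        have h0 : 0 ≤ t⁻¹ * μ (a * t ^ (-θ)) := mul_nonneg (inv_nonneg.mpr ht0.le) (hnonneg _)
        rw [Real.norm_eq_abs, abs_of_nonneg h0]
        calc t⁻¹ * μ (a * t ^ (-θ)) ≤ 1 * μ (a * t ^ (-θ)) := by
              gcongr; exact hnonneg _
          _ = μ (a * t ^ (-θ)) := one_mul _
          _ ≤ μ a := hmono hft
    have hYint : IntegrableOn (fun t => Y' t / Y t ^ p) (Ico 1 R) := by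
      have hYc : ContinuousOn Y (Icc 1 R) := fun t ht =>
        ((hderiv t ht.1).continuousAt).continuousWithinAt
      have hcont : ContinuousOn (fun t => Y' t / Y t ^ p) (Icc 1 R) := by
        apply ContinuousOn.div
        · exact hY'cont.mono (fun t ht => ht.1)
        · exact fun t ht => (Real.continuousAt_rpow_const _ _
            (Or.inl (hYpos t ht.1).ne')).comp_continuousWithinAt (hYc t ht)
        · exact fun t ht => (Real.rpow_pos_of_pos (hYpos t ht.1) p).ne'
      exact (hcont.integrableOn_compact isCompact_Icc).mono_set Ico_subset_Icc_self
    have hmono' : ∫ t in Ico (1:ℝ) R, c * (t⁻¹ * μ (a * t ^ (-θ)))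
        ≤ ∫ t in Ico (1:ℝ) R, Y' t / Y t ^ p := by
      refine setIntegral_mono_on (hgint.const_mul c) hYint measurableSet_Ico fun t ht => ?_
      have := hode t ht.1
      calc c * (t⁻¹ * μ (a * t ^ (-θ))) = c * t⁻¹ * μ (a * t ^ (-θ)) := by ring
        _ ≤ Y' t / Y t ^ p := hode t ht.1
    have hIcoIoc : ∫ t in Ico (1:ℝ) R, Y' t / Y t ^ p
        = ∫ t in (1:ℝ)..R, Y' t / Y t ^ p := by
      rw [show (volume.restrict (Ico (1:ℝ) R)) = volume.restrict (Ioc 1 R) from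
        Measure.restrict_congr_set Ico_ae_eq_Ioc, intervalIntegral.integral_of_le hR]
    have hB : c * ∫ t in Ico (1:ℝ) R, t⁻¹ * μ (a * t ^ (-θ)) ≤ K := by
      rw [← integral_const_mul]
      calc ∫ t in Ico (1:ℝ) R, c * (t⁻¹ * μ (a * t ^ (-θ)))
          ≤ ∫ t in Ico (1:ℝ) R, Y' t / Y t ^ p := hmono'
        _ = ∫ t in (1:ℝ)..R, Y' t / Y t ^ p := hIcoIoc
        _ ≤ K := step1 R hR
    rw [step2 R hR]
    rw [div_mul_eq_mul_div, le_div_iff₀ hc]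
    calc θ * (∫ t in Ico (1:ℝ) R, t⁻¹ * μ (a * t ^ (-θ))) * c
        = θ * (c * ∫ t in Ico (1:ℝ) R, t⁻¹ * μ (a * t ^ (-θ))) := by ring
      _ ≤ θ * K := by
          have := hB
          nlinarith
      _ = θ * K := rfl
  -- Step 3 : contradiction with the non-Dini condition
  apply hnonDini
  set b : ℕ → ℝ := fun n => a * ((n:ℝ)+1) ^ (-θ) with hb
  have hb0 : ∀ n, 0 < b n := fun n => by positivity
  have hn1 : ∀ n : ℕ, (1:ℝ) ≤ (n:ℝ) + 1 := fun n => by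
    have := Nat.cast_nonneg (α := ℝ) n; linarith
  have hblim : Filter.Tendsto b Filter.atTop (nhds 0) := by
    have h1 : Filter.Tendsto (fun n : ℕ => ((n:ℝ)+1)) Filter.atTop Filter.atTop :=
      Filter.tendsto_atTop_add_const_right _ 1 tendsto_natCast_atTop_atTop
    have h2 := (tendsto_rpow_neg_atTop hθ).comp h1
    have h3 := h2.const_mul a
    simpa using h3
  have hfi : ∀ n : ℕ, IntegrableOn (fun τ => μ τ / τ) (Ioc (b n) a) := by
    intro n
    apply Measure.integrableOn_of_bounded (M := μ a / b n)
    · exact ((measure_mono Ioc_subset_Icc_self).trans_lt measure_Icc_lt_top).ne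
    · exact (hμmeas.div measurable_id).aestronglyMeasurable
    · rw [ae_restrict_iff' measurableSet_Ioc]
      refine ae_of_all _ fun τ hτ => ?_
      have hτ0 : 0 < τ := lt_trans (hb0 n) hτ.1
      have h0 : 0 ≤ μ τ / τ := div_nonneg (hnonneg _) hτ0.le
      rw [Real.norm_eq_abs, abs_of_nonneg h0]
      exact div_le_div₀ (hnonneg a) (hmono hτ.2) (hb0 n) hτ.1.le
  refine integrableOn_Ioc_of_intervalIntegral_norm_bounded_left
    (I := θ / c * K) hfi hblim ?_
  refine Filter.Eventually.of_forall fun n => ?_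
  have heq : ∫ τ in Ioc (b n) a, ‖μ τ / τ‖ = ∫ τ in Ioc (b n) a, μ τ / τ := by
    refine setIntegral_congr_fun measurableSet_Ioc fun τ hτ => ?_
    have hτ0 : 0 < τ := lt_trans (hb0 n) hτ.1
    have h0 : 0 ≤ μ τ / τ := div_nonneg (hnonneg _) hτ0.le
    rw [Real.norm_eq_abs, abs_of_nonneg h0]
  rw [heq]
  exact hM ((n:ℝ)+1) (hn1 n)
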